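/- For every positive integer r and every nonnegative integer n, sum_{k=0}^{n} (-1)^k * (k!/(k+r)) * S(n, k) = (1/(r-1)!) * sum_{k=0}^{r-1} |s(r, k+1)| * B_{n+k}. -/

import Mathlib

open Finset

/-- Stirling numbers of the second kind. -/
def stirling2 : ℕ → ℕ → ℕ
  | 0, 0 => 1
  | 0, _ + 1 => 0
  | _ + 1, 0 => 0
  | n + 1, k + 1 => stirling2 n k + (k + 1) * stirling2 n (k + 1)

/-- Signed Stirling numbers of the first kind. -/
def stirling1 : ℕ → ℕ → ℤ
  | 0, 0 => 1
  | 0, _ + 1 => 0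
  | n + 1, 0 => -(n : ℤ) * stirling1 n 0
  | n + 1, k + 1 => stirling1 n k - (n : ℤ) * stirling1 n (k + 1)

/-- Bernoulli numbers of the second kind: `∫₀¹ x(x-1)⋯(x-n+1) dx`. -/
noncomputable def bernoulliStar (n : ℕ) : ℝ :=
  ∫ x in (0:ℝ)..1, (descPochhammer ℝ n).eval x

lemma stirling2_rec (n k : ℕ) : stirling2 (n+1) (k+1) = stirling2 n k + (k + 1) * stirling2 n (k + 1) := rfl
lemma stirling2_zero (n : ℕ) : stirling2 (n+1) 0 = 0 := rfl

/-- Unsigned Stirling numbers of the first kind. -/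
def ust : ℕ → ℕ → ℕ
  | 0, 0 => 1
  | 0, _ + 1 => 0
  | n + 1, 0 => n * ust n 0
  | n + 1, k + 1 => ust n k + n * ust n (k + 1)

lemma stirling1_eq : ∀ n k : ℕ, stirling1 n k = (-1 : ℤ) ^ (n + k) * ust n k := by
  intro n
  induction n with
  | zero => intro k; cases k <;> simp [stirling1, ust]
  | succ n ih =>
    intro k
    cases k with
    | zero =>
      rw [stirling1, ust, ih]
      push_cast
      ring
    | succ k =>
      rw [stirling1, ust, ih, ih]
      push_cast
      ring

lemma ust_zero_of_pos {r : ℕ} (hr : 0 < r) : ust r 0 = 0 := by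
  induction r with
  | zero => omega
  | succ r ih =>
    cases r with
    | zero => simp [ust]
    | succ r => rw [ust, ih (by omega)]; simp

lemma ust_eq_zero_of_lt : ∀ {n k : ℕ}, n < k → ust n k = 0 := by
  intro n
  induction n with
  | zero => intro k hk; cases k with | zero => omega | succ k => simp [ust]
  | succ n ih =>
    intro k hk
    cases k with
    | zero => omega
    | succ k => rw [ust, ih (by omega), ih (by omega)]; simp

lemma stirling2_eq_zero_of_lt : ∀ {n k : ℕ}, n < k → stirling2 n k = 0 := by
  intro n
  induction n with
  | zero => intro k hk; cases k with | zero => omega | succ k => simp [stirling2]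
  | succ n ih =>
    intro k hk
    cases k with
    | zero => omega
    | succ k => rw [stirling2, ih (by omega), ih (by omega)]; simp

lemma descFactorial_succ_succ (m k : ℕ) :
    (m + 1).descFactorial (k + 1) = m.descFactorial (k + 1) + (k + 1) * m.descFactorial k := by
  rcases Nat.lt_or_ge m k with h | h
  · rw [Nat.descFactorial_eq_zero_iff_lt.2 h, Nat.descFactorial_eq_zero_iff_lt.2 (by omega),
      Nat.descFactorial_eq_zero_iff_lt.2 (by omega)]
    simp
  · rw [Nat.succ_descFactorial_succ, Nat.descFactorial_succ]
    have : m + 1 = (m - k) + (k + 1) := by omega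
    rw [this, Nat.add_mul]

lemma mul_descFactorial (m k : ℕ) :
    m * m.descFactorial k = m.descFactorial (k + 1) + k * m.descFactorial k := by
  rcases Nat.lt_or_ge m k with h | h
  · rw [Nat.descFactorial_eq_zero_iff_lt.2 h, Nat.descFactorial_eq_zero_iff_lt.2 (by omega)]
    simp
  · rw [Nat.descFactorial_succ]
    have : m = (m - k) + k := by omega
    nth_rw 1 [this]
    rw [Nat.add_mul]

/-- `m ^ n = ∑ k, S(n,k) * m_(k)` -/
lemma pow_eq_sum_stirling2 (m : ℕ) : ∀ n : ℕ,
    m ^ n = ∑ k ∈ range (n + 1), stirling2 n k * m.descFactorial k := by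
  intro n
  induction n with
  | zero => simp [stirling2]
  | succ n ih =>
    rw [Finset.sum_range_succ', pow_succ, ih]
    have h0 : stirling2 (n + 1) 0 * m.descFactorial 0 = 0 := by simp [stirling2]
    rw [h0, add_zero]
    have : ∀ k ∈ range (n + 1), stirling2 (n + 1) (k + 1) * m.descFactorial (k + 1)
        = stirling2 n k * m.descFactorial (k + 1)
          + (k + 1) * stirling2 n (k + 1) * m.descFactorial (k + 1) := by
      intro k _
      rw [stirling2]; ring
    rw [Finset.sum_congr rfl this, Finset.sum_add_distrib]
    have h2 : ∑ k ∈ range (n + 1), (k + 1) * stirling2 n (k + 1) * m.descFactorial (k + 1)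
        = ∑ k ∈ range (n + 1), k * stirling2 n k * m.descFactorial k := by
      rw [Finset.sum_range_succ, stirling2_eq_zero_of_lt (by omega), Finset.sum_range_succ']
      simp
    rw [h2, ← Finset.sum_add_distrib, Finset.sum_mul]
    apply Finset.sum_congr rfl
    intro k _
    rw [mul_assoc, mul_comm (m.descFactorial k) m, mul_descFactorial]
    ring

/-- telescoping: `(k+1) * ∑_{i<m} i_(k) = m_(k+1)` -/
lemma sum_descFactorial (k : ℕ) : ∀ m : ℕ,
    (k + 1) * ∑ i ∈ range m, i.descFactorial k = m.descFactorial (k + 1) := by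
  intro m
  induction m with
  | zero => simp
  | succ m ih =>
    rw [Finset.sum_range_succ, Nat.mul_add, ih, descFactorial_succ_succ]

lemma sum_pow_eq (n m : ℕ) :
    (∑ i ∈ range m, (i : ℚ) ^ n)
      = ∑ k ∈ range (n + 1), (stirling2 n k : ℚ) * (m.descFactorial (k + 1) : ℚ) / ((k : ℚ) + 1) := by
  have step1 : (∑ i ∈ range m, (i : ℚ) ^ n)
      = ∑ i ∈ range m, ∑ k ∈ range (n + 1), (stirling2 n k : ℚ) * (i.descFactorial k : ℚ) := by
    refine Finset.sum_congr rfl fun i _ => ?_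
    exact_mod_cast congrArg (Nat.cast : ℕ → ℚ) (pow_eq_sum_stirling2 i n)
  rw [step1, Finset.sum_comm]
  refine Finset.sum_congr rfl fun k _ => ?_
  have hk : ((k : ℚ) + 1) ≠ 0 := by positivity
  have hd : (m.descFactorial (k + 1) : ℚ) = ((k : ℚ) + 1) * ∑ i ∈ range m, (i.descFactorial k : ℚ) := by
    exact_mod_cast congrArg (Nat.cast : ℕ → ℚ) (sum_descFactorial k m).symm
  rw [← Finset.mul_sum, hd]
  field_simp

open Polynomial in
lemma coeff_one_descPochhammer : ∀ k : ℕ,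
    (descPochhammer ℚ (k + 1)).coeff 1 = (-1 : ℚ) ^ k * k.factorial := by
  intro k
  induction k with
  | zero => simp
  | succ k ih =>
    rw [descPochhammer_succ_right, mul_sub, coeff_sub, coeff_mul_X, coeff_mul_natCast, ih,
      coeff_zero_eq_eval_zero]
    rw [descPochhammer_eval_zero, if_neg (Nat.succ_ne_zero k)]
    push_cast [Nat.factorial_succ]
    ring

open Polynomial in
/-- The key base-case identity. -/
lemma bernoulli_eq (n : ℕ) :
    (_root_.bernoulli n : ℚ) = ∑ k ∈ range (n + 1), (-1 : ℚ) ^ k * (k.factorial : ℚ) / ((k : ℚ) + 1) * stirling2 n k := by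
  set P : ℚ[X] := ∑ k ∈ range (n + 1), C ((stirling2 n k : ℚ) / ((k : ℚ) + 1)) * descPochhammer ℚ (k + 1) with hP
  set Q : ℚ[X] := ∑ i ∈ range (n + 1), C (_root_.bernoulli i * ((n + 1).choose i) / ((n : ℚ) + 1)) * X ^ (n + 1 - i) with hQ
  have hPQ : P = Q := by
    apply Polynomial.eq_of_infinite_eval_eq
    apply Set.Infinite.mono (s := (Nat.cast : ℕ → ℚ) '' Set.univ)
    · rintro _ ⟨m, -, rfl⟩
      simp only [Set.mem_setOf_eq, hP, hQ, eval_finset_sum, eval_mul, eval_C, eval_pow, eval_X]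
      have l : ∑ k ∈ range (n + 1), (stirling2 n k : ℚ) / ((k : ℚ) + 1) * (descPochhammer ℚ (k + 1)).eval (m : ℚ)
          = ∑ i ∈ range m, (i : ℚ) ^ n := by
        rw [sum_pow_eq]
        refine Finset.sum_congr rfl fun k _ => ?_
        rw [descPochhammer_eval_eq_descFactorial]
        ring
      have r : ∑ i ∈ range (n + 1), _root_.bernoulli i * ((n + 1).choose i) / ((n : ℚ) + 1) * (m : ℚ) ^ (n + 1 - i)
          = ∑ i ∈ range m, (i : ℚ) ^ n := by
        rw [sum_range_pow m n]
        refine Finset.sum_congr rfl fun i _ => ?_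
        ring
      rw [l, r]
    · exact Set.infinite_of_injective_forall_mem (f := fun m : ℕ => (m : ℚ))
        Nat.cast_injective (fun m => ⟨m, Set.mem_univ m, rfl⟩)
  have hcoeff := congrArg (fun p : ℚ[X] => p.coeff 1) hPQ
  simp only [hP, hQ, finset_sum_coeff, coeff_C_mul, coeff_X_pow] at hcoeff
  have hPc : ∑ k ∈ range (n + 1), (stirling2 n k : ℚ) / ((k : ℚ) + 1) * (descPochhammer ℚ (k + 1)).coeff 1
      = ∑ k ∈ range (n + 1), (-1 : ℚ) ^ k * (k.factorial : ℚ) / ((k : ℚ) + 1) * stirling2 n k := by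
    refine Finset.sum_congr rfl fun k _ => ?_
    rw [coeff_one_descPochhammer]
    ring
  have hQc : ∑ i ∈ range (n + 1), _root_.bernoulli i * ((n + 1).choose i) / ((n : ℚ) + 1) * (if 1 = n + 1 - i then 1 else 0)
      = (_root_.bernoulli n : ℚ) := by
    rw [Finset.sum_eq_single n]
    · rw [if_pos (by omega), Nat.choose_succ_self_right]
      have : ((n:ℚ) + 1) ≠ 0 := by positivity
      field_simp
      push_cast
      ring
    · intro i hi hne
      rw [if_neg (by simp at hi; omega), mul_zero]
    · intro h; exact absurd (Finset.self_mem_range_succ n) h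
  rw [hPc, hQc] at hcoeff
  exact hcoeff.symm

lemma ust_rec (n k : ℕ) : ust (n+1) (k+1) = ust n k + n * ust n (k+1) := rfl
lemma ust_one_one : ust 1 1 = 1 := by simp [ust]

noncomputable def L (r n : ℕ) : ℚ :=
  ∑ k ∈ Finset.range (n + 1), (-1 : ℚ) ^ k * (k.factorial : ℚ) / (k + r) * stirling2 n k

lemma Lrec (r n : ℕ) (hr : 1 ≤ r) :
    L r (n + 1) = (r : ℚ) * L (r + 1) n - (r : ℚ) * L r n := by
  have hr0 : (0 : ℚ) < r := by exact_mod_cast hr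
  -- expand L r (n+1)
  rw [L, Finset.sum_range_succ']
  have h0 : (-1 : ℚ) ^ 0 * ((0:ℕ).factorial : ℚ) / ((0:ℕ) + r) * stirling2 (n+1) 0 = 0 := by
    rw [stirling2_zero]; simp
  rw [h0, add_zero]
  have hsplit : ∀ k ∈ range (n+1),
      (-1 : ℚ) ^ (k+1) * ((k+1).factorial : ℚ) / ((k+1 : ℕ) + r) * stirling2 (n+1) (k+1)
        = ((-1 : ℚ) ^ (k+1) * ((k+1).factorial : ℚ) / ((k+1 : ℕ) + r) * stirling2 n k)
          + ((-1 : ℚ) ^ (k+1) * ((k+1).factorial : ℚ) / ((k+1 : ℕ) + r) * ((k+1) * stirling2 n (k+1))) := by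
    intro k _
    rw [stirling2_rec]
    push_cast
    ring
  rw [Finset.sum_congr rfl hsplit, Finset.sum_add_distrib]
  -- reindex the second sum
  set g : ℕ → ℚ := fun k => (-1 : ℚ) ^ k * (k.factorial : ℚ) / ((k : ℚ) + r) * ((k : ℚ) * stirling2 n k) with hg
  have hBeq : ∀ k ∈ range (n+1),
      (-1 : ℚ) ^ (k+1) * ((k+1).factorial : ℚ) / ((k+1 : ℕ) + r) * ((k+1) * stirling2 n (k+1)) = g (k+1) := by
    intro k _; rw [hg]; push_cast; ring
  rw [Finset.sum_congr rfl hBeq]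
  have hsum1 := Finset.sum_range_succ' g (n+1)
  have hsum2 := Finset.sum_range_succ g (n+1)
  have hg0 : g 0 = 0 := by rw [hg]; simp
  have hgn : g (n+1) = 0 := by simp only [hg]; rw [stirling2_eq_zero_of_lt (by omega)]; simp
  have hB : ∑ k ∈ range (n+1), g (k+1) = ∑ k ∈ range (n+1), g k := by
    rw [hg0, add_zero] at hsum1
    rw [hgn, add_zero] at hsum2
    rw [← hsum1, hsum2]
  rw [hB]
  -- now combine per-k
  rw [L, L, Finset.mul_sum, Finset.mul_sum, ← Finset.sum_sub_distrib, ← Finset.sum_add_distrib]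
  refine Finset.sum_congr rfl fun k _ => ?_
  rw [hg]
  have h1 : ((k : ℚ) + r) ≠ 0 := by positivity
  have h2 : ((k : ℚ) + r + 1) ≠ 0 := by positivity
  have hc1 : ((k+1 : ℕ) : ℚ) + r = (k : ℚ) + r + 1 := by push_cast; ring
  have hc2 : ((k : ℚ) + ((r+1 : ℕ) : ℚ)) = (k : ℚ) + r + 1 := by push_cast; ring
  rw [hc1, hc2]
  have hf : (((k+1).factorial : ℚ)) = ((k:ℚ)+1) * (k.factorial : ℚ) := by
    rw [Nat.factorial_succ]; push_cast; ring
  rw [hf]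
  field_simp
  ring

lemma Rrec (r n : ℕ) (hr : 1 ≤ r) :
    ∑ k ∈ range (r+1), (ust (r+1) (k+1) : ℚ) * bernoulli (n+k)
      = ∑ k ∈ range r, (ust r (k+1) : ℚ) * bernoulli ((n+1)+k)
        + (r : ℚ) * ∑ k ∈ range r, (ust r (k+1) : ℚ) * bernoulli (n+k) := by
  have hsplit : ∀ k ∈ range (r+1),
      (ust (r+1) (k+1) : ℚ) * bernoulli (n+k)
        = (ust r k : ℚ) * bernoulli (n+k) + (r : ℚ) * ((ust r (k+1) : ℚ) * bernoulli (n+k)) := by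
    intro k _; rw [ust_rec]; push_cast; ring
  rw [Finset.sum_congr rfl hsplit, Finset.sum_add_distrib]
  congr 1
  · rw [Finset.sum_range_succ', ust_zero_of_pos (by omega)]
    simp only [Nat.cast_zero, zero_mul, add_zero]
    refine Finset.sum_congr rfl fun k _ => ?_
    congr 2
    omega
  · rw [← Finset.mul_sum, Finset.sum_range_succ, ust_eq_zero_of_lt (by omega)]
    simp

lemma habs (r k : ℕ) : |(stirling1 r (k+1) : ℚ)| = (ust r (k+1) : ℚ) := by
  have h : ((stirling1 r (k+1) : ℤ) : ℚ) = ((-1:ℚ)) ^ (r+(k+1)) * (ust r (k+1) : ℚ) := by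
    exact_mod_cast congrArg (Int.cast : ℤ → ℚ) (stirling1_eq r (k+1))
  rw [h, abs_mul, abs_pow, abs_neg, abs_one, one_pow, one_mul, abs_of_nonneg (by positivity)]

lemma main : ∀ r : ℕ, 1 ≤ r → ∀ n : ℕ, L r n
    = 1 / ((r - 1).factorial : ℚ) * ∑ k ∈ range r, (ust r (k+1) : ℚ) * bernoulli (n + k) := by
  intro r hr
  induction r, hr using Nat.le_induction with
  | base =>
    intro n
    have h1 : L 1 n = (bernoulli n : ℚ) := by
      rw [L, bernoulli_eq n]
      norm_num
    rw [h1, Finset.sum_range_one, ust_one_one]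
    norm_num
  | succ r hr ih =>
    intro n
    obtain ⟨s, rfl⟩ : ∃ s, r = s + 1 := ⟨r - 1, by omega⟩
    simp only [Nat.add_sub_cancel] at ih ⊢
    have e1 := ih (n+1)
    have e2 := ih n
    have e3 := Lrec (s+1) n (by omega)
    rw [Rrec (s+1) n (by omega)]
    set X := ∑ k ∈ range (s+1), (ust (s+1) (k+1) : ℚ) * bernoulli ((n+1)+k) with hX
    set Y := ∑ k ∈ range (s+1), (ust (s+1) (k+1) : ℚ) * bernoulli (n+k) with hY
    have hfac : ((s+1).factorial : ℚ) = ((s:ℚ)+1) * (s.factorial : ℚ) := by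
      rw [Nat.factorial_succ]; push_cast; ring
    have hs : ((s.factorial : ℚ)) ≠ 0 := Nat.cast_ne_zero.2 (Nat.factorial_ne_zero s)
    have hs1 : ((s:ℚ)+1) ≠ 0 := by positivity
    have hcast : ((s+1 : ℕ) : ℚ) = (s:ℚ)+1 := by push_cast; ring
    rw [hcast] at e3
    rw [hfac, hcast]
    rw [e1, e2] at e3
    field_simp at e3 ⊢
    linarith

theorem stmt11 (r : ℕ) (hr : 0 < r) (n : ℕ) :
    ∑ k ∈ Finset.range (n + 1), (-1 : ℚ) ^ k * (k.factorial : ℚ) / (k + r) * stirling2 n k =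
      1 / ((r - 1).factorial : ℚ) *
        ∑ k ∈ Finset.range r, |(stirling1 r (k + 1) : ℚ)| * bernoulli (n + k) := by
  have h := main r hr n
  rw [L] at h
  rw [h]
  congr 1
  exact Finset.sum_congr rfl fun k _ => by rw [habs]
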